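/- Let ψ, φ : J → ℝ be C² functions on an interval J with φ' = (ψ')², and suppose ψ ≥ 0 and ψ'(y) − ψ(y)/(x+y) ≥ 0 on an open set U ⊆ {(x,y) : x + y > 0, y ∈ J}. Then u(x,y) = φ(y) − ψ(y)²/(x+y) satisfies on U: u_x = ψ(y)²/(x+y)² ≥ 0, u_y = (ψ'(y) − ψ(y)/(x+y))² ≥ 0, u_xx = −2u_x/(x+y), and u_xy = 2√(u_x·u_y)/(x+y). -/

import Mathlib

noncomputable def pdx (f : ℝ × ℝ → ℝ) (z : ℝ × ℝ) : ℝ := deriv (fun t => f (t, z.2)) z.1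

noncomputable def pdy (f : ℝ × ℝ → ℝ) (z : ℝ × ℝ) : ℝ := deriv (fun t => f (z.1, t)) z.2

/-- derivative in the x-slot -/
lemma derivA (c d b a : ℝ) (h : a + b ≠ 0) :
    deriv (fun t => c - d / (t + b)) a = d / (a + b) ^ 2 := by
  have h1 : HasDerivAt (fun t : ℝ => t + b) 1 a := (hasDerivAt_id a).add_const b
  have h2 : HasDerivAt (fun t => c - d / (t + b))
      (0 - (0 * (a + b) - d * 1) / (a + b) ^ 2) a :=
    (hasDerivAt_const a c).sub ((hasDerivAt_const a d).div h1 h)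
  rw [h2.deriv]
  field_simp
  ring

lemma algB (a b s : ℝ) (hs : s ≠ 0) :
    a ^ 2 - (2 * b ^ 1 * a * s - b ^ 2 * 1) / s ^ 2 = (a - b / s) ^ 2 := by
  field_simp
  ring

lemma algC (a b s : ℝ) (hs : s ≠ 0) :
    (2 * b ^ 1 * a * s ^ 2 - b ^ 2 * (2 * s ^ 1 * 1)) / (s ^ 2) ^ 2
      = 2 * (b / s * (a - b / s)) / s := by
  field_simp

lemma algD (a b s : ℝ) : b ^ 2 / s ^ 2 * (a - b / s) ^ 2 = (b / s * (a - b / s)) ^ 2 := by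
  rw [mul_pow, div_pow]

/-- Closed-form solutions: if φ' = (ψ')² on J and ψ ≥ 0, ψ'(y) − ψ(y)/(x+y) ≥ 0 on
an open U ⊆ {x+y>0, y ∈ J}, then u(x,y) = φ(y) − ψ(y)²/(x+y) satisfies
u_x = ψ²/(x+y)² ≥ 0, u_y = (ψ' − ψ/(x+y))² ≥ 0, u_xx = −2u_x/(x+y) and
u_xy = 2√(u_x·u_y)/(x+y). -/
theorem closed_form_solution (J : Set ℝ) (hJ : IsOpen J)
    (ψ φ : ℝ → ℝ) (hψ : ContDiffOn ℝ 2 ψ J) (hφ : ContDiffOn ℝ 2 φ J)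
    (hc : ∀ y ∈ J, deriv φ y = (deriv ψ y) ^ 2)
    (U : Set (ℝ × ℝ)) (hUopen : IsOpen U)
    (hU : ∀ z ∈ U, 0 < z.1 + z.2 ∧ z.2 ∈ J)
    (hψpos : ∀ z ∈ U, 0 ≤ ψ z.2)
    (hq : ∀ z ∈ U, 0 ≤ deriv ψ z.2 - ψ z.2 / (z.1 + z.2)) :
    ∀ z ∈ U,
      (pdx (fun w => φ w.2 - (ψ w.2) ^ 2 / (w.1 + w.2)) z
          = (ψ z.2) ^ 2 / (z.1 + z.2) ^ 2 ∧
        0 ≤ pdx (fun w => φ w.2 - (ψ w.2) ^ 2 / (w.1 + w.2)) z) ∧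
      (pdy (fun w => φ w.2 - (ψ w.2) ^ 2 / (w.1 + w.2)) z
          = (deriv ψ z.2 - ψ z.2 / (z.1 + z.2)) ^ 2 ∧
        0 ≤ pdy (fun w => φ w.2 - (ψ w.2) ^ 2 / (w.1 + w.2)) z) ∧
      pdx (pdx (fun w => φ w.2 - (ψ w.2) ^ 2 / (w.1 + w.2))) z
        = -2 * pdx (fun w => φ w.2 - (ψ w.2) ^ 2 / (w.1 + w.2)) z / (z.1 + z.2) ∧
      pdy (pdx (fun w => φ w.2 - (ψ w.2) ^ 2 / (w.1 + w.2))) z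
        = 2 * Real.sqrt (pdx (fun w => φ w.2 - (ψ w.2) ^ 2 / (w.1 + w.2)) z *
            pdy (fun w => φ w.2 - (ψ w.2) ^ 2 / (w.1 + w.2)) z) / (z.1 + z.2) := by
  intro z hz
  obtain ⟨hxy, hyJ⟩ := hU z hz
  have hne : z.1 + z.2 ≠ 0 := ne_of_gt hxy
  have hψd : DifferentiableAt ℝ ψ z.2 :=
    ((hψ.differentiableOn (by norm_num)).differentiableAt (hJ.mem_nhds hyJ))
  have hφd : DifferentiableAt ℝ φ z.2 :=
    ((hφ.differentiableOn (by norm_num)).differentiableAt (hJ.mem_nhds hyJ))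
  -- u_x
  have hux : pdx (fun w => φ w.2 - (ψ w.2) ^ 2 / (w.1 + w.2)) z
      = (ψ z.2) ^ 2 / (z.1 + z.2) ^ 2 := by
    simp only [pdx]
    exact derivA (φ z.2) (ψ z.2 ^ 2) z.2 z.1 hne
  -- u_y
  have hsum : HasDerivAt (fun t : ℝ => z.1 + t) 1 z.2 := by
    simpa using (hasDerivAt_id z.2).const_add z.1
  have huyD : HasDerivAt (fun t => φ t - ψ t ^ 2 / (z.1 + t))
      (deriv φ z.2 - (2 * ψ z.2 ^ 1 * deriv ψ z.2 * (z.1 + z.2) - ψ z.2 ^ 2 * 1)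
        / (z.1 + z.2) ^ 2) z.2 :=
    hφd.hasDerivAt.sub ((hψd.hasDerivAt.pow 2).div hsum hne)
  have huy : pdy (fun w => φ w.2 - (ψ w.2) ^ 2 / (w.1 + w.2)) z
      = (deriv ψ z.2 - ψ z.2 / (z.1 + z.2)) ^ 2 := by
    rw [pdy, huyD.deriv, hc z.2 hyJ]
    exact algB _ _ _ hne
  -- u_xx
  have hxev : ∀ᶠ t in nhds z.1,
      pdx (fun w => φ w.2 - (ψ w.2) ^ 2 / (w.1 + w.2)) (t, z.2)
        = ψ z.2 ^ 2 / (t + z.2) ^ 2 := by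
    have hop : IsOpen {t : ℝ | 0 < t + z.2} :=
      isOpen_lt continuous_const (continuous_id.add continuous_const)
    filter_upwards [hop.mem_nhds hxy] with t ht
    simp only [pdx]
    exact derivA (φ z.2) (ψ z.2 ^ 2) z.2 t (ne_of_gt ht)
  have huxx : pdx (pdx (fun w => φ w.2 - (ψ w.2) ^ 2 / (w.1 + w.2))) z
      = -2 * (ψ z.2 ^ 2 / (z.1 + z.2) ^ 2) / (z.1 + z.2) := by
    rw [pdx, Filter.EventuallyEq.deriv_eq hxev]
    have hd : HasDerivAt (fun t : ℝ => (t + z.2) ^ 2) (2 * (z.1 + z.2) ^ 1 * 1) z.1 :=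
      ((hasDerivAt_id z.1).add_const z.2).pow 2
    have h2 : HasDerivAt (fun t => ψ z.2 ^ 2 / (t + z.2) ^ 2)
        ((0 * (z.1 + z.2) ^ 2 - ψ z.2 ^ 2 * (2 * (z.1 + z.2) ^ 1 * 1)) / ((z.1 + z.2) ^ 2) ^ 2)
        z.1 := (hasDerivAt_const z.1 (ψ z.2 ^ 2)).div hd (pow_ne_zero 2 hne)
    rw [h2.deriv]
    field_simp
    ring
  -- u_xy
  have hyev : ∀ᶠ t in nhds z.2,
      pdx (fun w => φ w.2 - (ψ w.2) ^ 2 / (w.1 + w.2)) (z.1, t)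
        = ψ t ^ 2 / (z.1 + t) ^ 2 := by
    have hcont : ContinuousAt (fun t : ℝ => ((z.1, t) : ℝ × ℝ)) z.2 := by fun_prop
    filter_upwards [hcont.preimage_mem_nhds (hUopen.mem_nhds hz)] with t ht
    simp only [pdx]
    exact derivA (φ t) (ψ t ^ 2) t z.1 (ne_of_gt (hU _ ht).1)
  have huxy : pdy (pdx (fun w => φ w.2 - (ψ w.2) ^ 2 / (w.1 + w.2))) z
      = (2 * ψ z.2 ^ 1 * deriv ψ z.2 * (z.1 + z.2) ^ 2
          - ψ z.2 ^ 2 * (2 * (z.1 + z.2) ^ 1 * 1)) / ((z.1 + z.2) ^ 2) ^ 2 := by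
    rw [pdy, Filter.EventuallyEq.deriv_eq hyev]
    have hd : HasDerivAt (fun t : ℝ => (z.1 + t) ^ 2) (2 * (z.1 + z.2) ^ 1 * 1) z.2 :=
      hsum.pow 2
    exact (((hψd.hasDerivAt.pow 2).div hd (pow_ne_zero 2 hne))).deriv
  refine ⟨⟨hux, ?_⟩, ⟨huy, ?_⟩, by rw [huxx, hux], ?_⟩
  · rw [hux]; positivity
  · rw [huy]; positivity
  · rw [huxy, hux, huy]
    have hsq : Real.sqrt (ψ z.2 ^ 2 / (z.1 + z.2) ^ 2 *
        (deriv ψ z.2 - ψ z.2 / (z.1 + z.2)) ^ 2)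
        = ψ z.2 / (z.1 + z.2) * (deriv ψ z.2 - ψ z.2 / (z.1 + z.2)) := by
      rw [algD (deriv ψ z.2) (ψ z.2) (z.1 + z.2)]
      exact Real.sqrt_sq (mul_nonneg (div_nonneg (hψpos z hz) hxy.le) (hq z hz))
    rw [hsq]
    exact algC (deriv ψ z.2) (ψ z.2) _ hne
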